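/- arXiv:0906.4255 — 2 statements merged into one kernel-verified Lean document; each statement's English description precedes it below -/
import Mathlib

section
/- Let (E_t, β_{s,t}) be a subproduct system of two-dimensional Hilbert spaces with a basis (x_t,y_t)_t of type E_1(a) where a ∈ (0,1) (i.e. a ≠ 0). Then every automorphism (θ_t)_t of (E_t,β) has one of the following two forms: there exists c ∈ ℝ such that θ_t x_t = e^{ict} x_t and θ_t y_t = e^{ict} y_t for all t, or there exists c ∈ ℝ such that θ_t x_t = e^{ict} y_t and θ_t y_t = e^{ict} x_t for all t. -/
noncomputable section

open scoped TensorProduct ComplexConjugate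

namespace SubprodHilbert

section TensorConstruction


variable {E F : Type*} [NormedAddCommGroup E] [InnerProductSpace ℂ E]
  [NormedAddCommGroup F] [InnerProductSpace ℂ F]

local notation "⟪" x ", " y "⟫" => @inner ℂ _ _ x y

/-- For fixed `u, v`, the ℂ-bilinear functional `(u', v') ↦ ⟪u,u'⟫ ⟪v,v'⟫`. -/
def innerAux (u : E) (v : F) : E →ₗ[ℂ] F →ₗ[ℂ] ℂ :=
  LinearMap.mk₂ ℂ (fun u' v' => ⟪u, u'⟫ * ⟪v, v'⟫)
    (fun m₁ m₂ n => by simp [inner_add_right]; ring)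
    (fun c m n => by simp [inner_smul_right]; ring)
    (fun m n₁ n₂ => by simp [inner_add_right]; ring)
    (fun c m n => by simp [inner_smul_right]; ring)

@[simp] lemma innerAux_apply (u u' : E) (v v' : F) :
    innerAux u v u' v' = ⟪u, u'⟫ * ⟪v, v'⟫ := rfl

/-- The (conjugate-linear-in-the-first-variable) map sending `z : E ⊗ F` to the linear
functional `w ↦ ⟪z, w⟫`. -/
def innerFunc : E ⊗[ℂ] F →+ (E ⊗[ℂ] F →ₗ[ℂ] ℂ) :=
  TensorProduct.liftAddHom
    (AddMonoidHom.mk'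
      (fun u => AddMonoidHom.mk' (fun v => TensorProduct.lift (innerAux u v))
        (fun v₁ v₂ => by
          apply TensorProduct.ext'
          intro u' v'
          simp [inner_add_left]
          ring))
      (fun u₁ u₂ => by
        ext v : 1
        apply TensorProduct.ext'
        intro u' v'
        simp [inner_add_left]
        ring))
    (fun c u v => by
      apply TensorProduct.ext'
      intro u' v'
      simp [inner_smul_left]
      ring)

@[simp] lemma innerFunc_tmul (u u' : E) (v v' : F) :
    innerFunc (u ⊗ₜ[ℂ] v) (u' ⊗ₜ[ℂ] v') = ⟪u, u'⟫ * ⟪v, v'⟫ := rfl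

lemma innerFunc_smul (c : ℂ) (z : E ⊗[ℂ] F) :
    innerFunc (c • z) = conj c • innerFunc z := by
  induction z using TensorProduct.induction_on with
  | zero => simp
  | tmul u v =>
      rw [TensorProduct.smul_tmul']
      apply TensorProduct.ext'
      intro u' v'
      simp [inner_smul_left]
      ring
  | add z₁ z₂ h₁ h₂ => rw [smul_add, map_add, map_add, h₁, h₂, smul_add]

lemma innerFunc_conj_symm (z w : E ⊗[ℂ] F) :
    conj (innerFunc w z) = innerFunc z w := by
  induction z using TensorProduct.induction_on with
  | zero => simp
  | tmul u v =>
      induction w using TensorProduct.induction_on with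
      | zero => simp
      | tmul u' v' =>
          simp only [innerFunc_tmul, map_mul, inner_conj_symm]
      | add w₁ w₂ h₁ h₂ => simp [map_add, h₁, h₂]
  | add z₁ z₂ h₁ h₂ => simp [map_add, h₁, h₂]

lemma exists_orthonormal_rep (z : E ⊗[ℂ] F) :
    ∃ (n : ℕ) (e : Fin n → E) (w : Fin n → F),
      Orthonormal ℂ e ∧ z = ∑ i, e i ⊗ₜ[ℂ] w i := by
  obtain ⟨S, rfl⟩ := TensorProduct.exists_finset z
  set U : Submodule ℂ E := Submodule.span ℂ (Prod.fst '' (S : Set (E × F))) with hU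
  haveI : FiniteDimensional ℂ U :=
    FiniteDimensional.span_of_finite ℂ (S.finite_toSet.image _)
  let b : OrthonormalBasis (Fin (Module.finrank ℂ U)) ℂ U := stdOrthonormalBasis ℂ U
  have hone : Orthonormal ℂ (fun i => (b i : E)) := by
    have hb := b.orthonormal
    constructor
    · intro i; simpa [norm] using hb.1 i
    · intro i j hij; simpa [Submodule.coe_inner] using hb.2 hij
  refine ⟨_, fun i => (b i : E), fun i => ∑ p ∈ S, ⟪(b i : E), p.1⟫ • p.2, hone, ?_⟩
  have key : ∀ p ∈ S, p.1 ⊗ₜ[ℂ] p.2 = ∑ i, ⟪(b i : E), p.1⟫ • ((b i : E) ⊗ₜ[ℂ] p.2) := by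
    intro p hp
    have hmem : p.1 ∈ U := Submodule.subset_span ⟨p, hp, rfl⟩
    have hrep : ((∑ i, (⟪b i, (⟨p.1, hmem⟩ : U)⟫ : ℂ) • b i : U) : E) = p.1 := by
      rw [b.sum_repr' ⟨p.1, hmem⟩]
    have h2 : ∀ i, (⟪b i, (⟨p.1, hmem⟩ : U)⟫ : ℂ) = ⟪(b i : E), p.1⟫ := fun i =>
      Submodule.coe_inner U (b i) ⟨p.1, hmem⟩
    have hrep' : p.1 = ∑ i, ⟪(b i : E), p.1⟫ • (b i : E) := by
      calc p.1 = ((∑ i, (⟪b i, (⟨p.1, hmem⟩ : U)⟫ : ℂ) • b i : U) : E) := hrep.symm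
        _ = ∑ i, (⟪b i, (⟨p.1, hmem⟩ : U)⟫ : ℂ) • (b i : E) := by push_cast; rfl
        _ = ∑ i, ⟪(b i : E), p.1⟫ • (b i : E) := Finset.sum_congr rfl fun i _ => by rw [h2]
    calc p.1 ⊗ₜ[ℂ] p.2 = (∑ i, ⟪(b i : E), p.1⟫ • (b i : E)) ⊗ₜ[ℂ] p.2 := by rw [← hrep']
      _ = ∑ i, ⟪(b i : E), p.1⟫ • ((b i : E) ⊗ₜ[ℂ] p.2) := by
          rw [TensorProduct.sum_tmul]
          refine Finset.sum_congr rfl fun i _ => ?_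
          rw [TensorProduct.smul_tmul']
  calc ∑ p ∈ S, p.1 ⊗ₜ[ℂ] p.2
      = ∑ p ∈ S, ∑ i, ⟪(b i : E), p.1⟫ • ((b i : E) ⊗ₜ[ℂ] p.2) :=
        Finset.sum_congr rfl key
    _ = ∑ i, ∑ p ∈ S, ⟪(b i : E), p.1⟫ • ((b i : E) ⊗ₜ[ℂ] p.2) := Finset.sum_comm
    _ = ∑ i, (b i : E) ⊗ₜ[ℂ] (∑ p ∈ S, ⟪(b i : E), p.1⟫ • p.2) := by
        refine Finset.sum_congr rfl fun i _ => ?_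
        rw [TensorProduct.tmul_sum]
        refine Finset.sum_congr rfl fun p _ => ?_
        rw [TensorProduct.tmul_smul]

lemma innerFunc_self (n : ℕ) (e : Fin n → E) (w : Fin n → F) (he : Orthonormal ℂ e) :
    innerFunc (∑ i, e i ⊗ₜ[ℂ] w i) (∑ i, e i ⊗ₜ[ℂ] w i) = ∑ i, ⟪w i, w i⟫ := by
  have hee : ∀ i j, (⟪e i, e j⟫ : ℂ) = if i = j then 1 else 0 := orthonormal_iff_ite.mp he
  simp only [map_sum, LinearMap.sum_apply, Finset.sum_apply, innerFunc_tmul, hee, ite_mul,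
    one_mul, zero_mul]
  rw [Finset.sum_comm]
  simp

/-- The inner-product-space core on the algebraic tensor product of two complex
inner product spaces, determined by `⟪u ⊗ v, u' ⊗ v'⟫ = ⟪u,u'⟫ ⟪v,v'⟫`. -/
def tensorCore : InnerProductSpace.Core ℂ (E ⊗[ℂ] F) where
  inner z w := innerFunc z w
  conj_inner_symm := innerFunc_conj_symm
  re_inner_nonneg z := by
    show 0 ≤ RCLike.re (innerFunc z z)
    obtain ⟨n, e, w, he, rfl⟩ := exists_orthonormal_rep z
    rw [innerFunc_self n e w he]
    rw [map_sum]
    exact Finset.sum_nonneg fun i _ => inner_self_nonneg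
  add_left z₁ z₂ w := by
    show innerFunc (z₁ + z₂) w = innerFunc z₁ w + innerFunc z₂ w
    rw [map_add]; rfl
  smul_left z w c := by
    show innerFunc (c • z) w = conj c * innerFunc z w
    rw [innerFunc_smul]; rfl
  definite z hz := by
    replace hz : innerFunc z z = 0 := hz
    obtain ⟨n, e, w, he, rfl⟩ := exists_orthonormal_rep z
    rw [innerFunc_self n e w he] at hz
    have hz' : ∑ i, (‖w i‖ ^ 2 : ℝ) = 0 := by
      have := congrArg Complex.re hz
      simpa [← @inner_self_eq_norm_sq ℂ] using this
    have hw : ∀ i ∈ Finset.univ, w i = 0 := by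
      intro i hi
      have h0 : (‖w i‖ ^ 2 : ℝ) = 0 :=
        (Finset.sum_eq_zero_iff_of_nonneg fun j _ => sq_nonneg _).mp hz' i hi
      simpa using h0
    calc ∑ i, e i ⊗ₜ[ℂ] w i = ∑ i : Fin n, (0 : E ⊗[ℂ] F) :=
          Finset.sum_congr rfl fun i hi => by rw [hw i hi, TensorProduct.tmul_zero]
      _ = 0 := Finset.sum_const_zero

instance tensorNormedAddCommGroup : NormedAddCommGroup (E ⊗[ℂ] F) :=
  @InnerProductSpace.Core.toNormedAddCommGroup ℂ _ _ _ _ tensorCore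

instance tensorInnerProductSpace : InnerProductSpace ℂ (E ⊗[ℂ] F) :=
  InnerProductSpace.ofCore tensorCore.toCore

@[simp] lemma inner_tmul (u u' : E) (v v' : F) :
    (inner ℂ (u ⊗ₜ[ℂ] v) (u' ⊗ₜ[ℂ] v') : ℂ) = ⟪u, u'⟫ * ⟪v, v'⟫ := rfl
end TensorConstruction


/-- Cast between the fibers of a family of inner product spaces along an equality of
indices, as a linear isometric isomorphism. -/
def castE {ι : Type*} (E : ι → Type*) [∀ t, NormedAddCommGroup (E t)]
    [∀ t, InnerProductSpace ℂ (E t)] {a b : ι} (h : a = b) : E a ≃ₗᵢ[ℂ] E b := by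
  subst h; exact LinearIsometryEquiv.refl ℂ (E a)


section Discrete

variable (E F : ℕ+ → Type*)
  [∀ t, NormedAddCommGroup (E t)] [∀ t, InnerProductSpace ℂ (E t)]
  [∀ t, NormedAddCommGroup (F t)] [∀ t, InnerProductSpace ℂ (F t)]
variable (β : ∀ s t : ℕ+, E (s + t) →ₗᵢ[ℂ] (E s ⊗[ℂ] E t))
variable (γ : ∀ s t : ℕ+, F (s + t) →ₗᵢ[ℂ] (F s ⊗[ℂ] F t))

/-- The associativity condition in the definition of a subproduct system. -/
def SubprodAssoc : Prop :=
  ∀ r s t : ℕ+, ∀ u : E (r + s + t),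
    (TensorProduct.assoc ℂ (E r) (E s) (E t))
      (TensorProduct.map (β r s).toLinearMap LinearMap.id (β (r + s) t u))
    = TensorProduct.map LinearMap.id (β s t).toLinearMap
        (β r (s + t) (castE E (add_assoc r s t) u))

/-- `(x, y)` is a basis of type `𝓔₁(a)` of the subproduct system `(E, β)`. -/
def IsBasisE1 (a : ℝ) (x y : ∀ t : ℕ+, E t) : Prop :=
  (∀ t, ‖x t‖ = 1) ∧ (∀ t, ‖y t‖ = 1) ∧
  (∀ t : ℕ+, (inner ℂ (x t) (y t) : ℂ) = (a : ℂ) ^ (t : ℕ)) ∧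
  (∀ s t : ℕ+, β s t (x (s + t)) = x s ⊗ₜ[ℂ] x t) ∧
  (∀ s t : ℕ+, β s t (y (s + t)) = y s ⊗ₜ[ℂ] y t)

/-- `(x, y)` is a basis of type `𝓔₂(a)` of the subproduct system `(E, β)`. -/
def IsBasisE2 (a : ℝ) (x y : ∀ t : ℕ+, E t) : Prop :=
  (∀ t, ‖x t‖ = 1) ∧ (∀ t, ‖y t‖ = 1) ∧
  (∀ t : ℕ+, (inner ℂ (x t) (y t) : ℂ) = (a : ℂ) ^ (t : ℕ)) ∧
  (∀ s t : ℕ+, Even (s : ℕ) → β s t (x (s + t)) = x s ⊗ₜ[ℂ] x t) ∧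
  (∀ s t : ℕ+, ¬ Even (s : ℕ) → β s t (x (s + t)) = x s ⊗ₜ[ℂ] y t) ∧
  (∀ s t : ℕ+, Even (s : ℕ) → β s t (y (s + t)) = y s ⊗ₜ[ℂ] y t) ∧
  (∀ s t : ℕ+, ¬ Even (s : ℕ) → β s t (y (s + t)) = y s ⊗ₜ[ℂ] x t)

/-- `(x, y)` is a basis of type `𝓔₃(λ)` of the subproduct system `(E, β)`. -/
def IsBasisE3 (l : ℂ) (x y : ∀ t : ℕ+, E t) : Prop :=
  (∀ t, ‖x t‖ = 1) ∧
  (∀ t : ℕ+, ‖y t‖ ^ 2 = ∑ k ∈ Finset.range (t : ℕ), ‖l‖ ^ (2 * k)) ∧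
  (∀ t : ℕ+, (inner ℂ (x t) (y t) : ℂ) = 0) ∧
  (∀ s t : ℕ+, β s t (x (s + t)) = x s ⊗ₜ[ℂ] x t) ∧
  (∀ s t : ℕ+, β s t (y (s + t)) = y s ⊗ₜ[ℂ] x t + l ^ (s : ℕ) • (x s ⊗ₜ[ℂ] y t))

/-- `(x, y)` is a basis of type `𝓔₄` of the subproduct system `(E, β)`. -/
def IsBasisE4 (x y : ∀ t : ℕ+, E t) : Prop :=
  (∀ t, ‖x t‖ = 1) ∧ (∀ t, ‖y t‖ = 1) ∧
  (∀ t : ℕ+, (inner ℂ (x t) (y t) : ℂ) = 0) ∧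
  (∀ s t : ℕ+, β s t (x (s + t)) = x s ⊗ₜ[ℂ] x t) ∧
  (∀ s t : ℕ+, β s t (y (s + t)) = y s ⊗ₜ[ℂ] x t)

/-- `(x, y)` is a basis of type `𝓔₅` of the subproduct system `(E, β)`. -/
def IsBasisE5 (x y : ∀ t : ℕ+, E t) : Prop :=
  (∀ t, ‖x t‖ = 1) ∧ (∀ t, ‖y t‖ = 1) ∧
  (∀ t : ℕ+, (inner ℂ (x t) (y t) : ℂ) = 0) ∧
  (∀ s t : ℕ+, β s t (x (s + t)) = x s ⊗ₜ[ℂ] x t) ∧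
  (∀ s t : ℕ+, β s t (y (s + t)) = x s ⊗ₜ[ℂ] y t)

/-- The five types of bases, together with their parameters. -/
inductive BType : Type
  | e1 (a : ℝ) | e2 (a : ℝ) | e3 (l : ℂ) | e4 | e5

/-- `(x, y)` is a basis of the subproduct system `(E, β)` of the given type (this includes
the admissibility constraints `a ∈ [0,1)`, resp. `λ ≠ 0`, on the parameter). -/
def IsBasisOfType : BType → (∀ t : ℕ+, E t) → (∀ t : ℕ+, E t) → Prop
  | .e1 a => fun x y => 0 ≤ a ∧ a < 1 ∧ IsBasisE1 E β a x y
  | .e2 a => fun x y => 0 ≤ a ∧ a < 1 ∧ IsBasisE2 E β a x y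
  | .e3 l => fun x y => l ≠ 0 ∧ IsBasisE3 E β l x y
  | .e4 => fun x y => IsBasisE4 E β x y
  | .e5 => fun x y => IsBasisE5 E β x y

/-- The family `θ` of unitaries intertwines the subproduct systems `(E, β)` and `(F, γ)`,
i.e. it is an isomorphism of subproduct systems. -/
def Intertwines (θ : ∀ t : ℕ+, E t ≃ₗᵢ[ℂ] F t) : Prop :=
  ∀ s t : ℕ+, ∀ w : E (s + t),
    γ s t (θ (s + t) w) =
      TensorProduct.map (θ s).toLinearEquiv.toLinearMap (θ t).toLinearEquiv.toLinearMap
        (β s t w)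

/-- The structure maps of the subproduct system `(E_{mt})_t` obtained by restricting
`(E, β)` to the multiples of `m`. -/
def restrictβ (m : ℕ+) :
    ∀ s t : ℕ+, E (m * (s + t)) →ₗᵢ[ℂ] (E (m * s) ⊗[ℂ] E (m * t)) := fun s t =>
  (β (m * s) (m * t)).comp (castE E (by rw [mul_add])).toLinearIsometry

end Discrete


section Aux

variable {V : Type*} [NormedAddCommGroup V] [InnerProductSpace ℂ V]

lemma span_pair_rep (h2 : Module.finrank ℂ V = 2) (x y : V) (hx : ‖x‖ = 1) (hy : ‖y‖ = 1)
    (μ : ℂ) (hμ : (inner ℂ x y : ℂ) = μ) (hμ1 : ‖μ‖ < 1) (u : V) :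
    ∃ α γ : ℂ, u = α • x + γ • y := by
  have hxx : (inner ℂ x x : ℂ) = 1 := by
    rw [inner_self_eq_norm_sq_to_K, hx]; norm_num
  have hyy : (inner ℂ y y : ℂ) = 1 := by
    rw [inner_self_eq_norm_sq_to_K, hy]; norm_num
  have hyx : (inner ℂ y x : ℂ) = conj μ := by rw [← inner_conj_symm, hμ]
  have hli : LinearIndependent ℂ ![x, y] := by
    rw [LinearIndependent.pair_iff]
    intro s t hst
    have h1 : (inner ℂ x (s • x + t • y) : ℂ) = 0 := by rw [hst, inner_zero_right]
    have h2' : (inner ℂ y (s • x + t • y) : ℂ) = 0 := by rw [hst, inner_zero_right]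
    rw [inner_add_right, inner_smul_right, inner_smul_right, hxx, hμ] at h1
    rw [inner_add_right, inner_smul_right, inner_smul_right, hyx, hyy] at h2'
    have hnorm : μ * conj μ ≠ 1 := by
      intro h
      have h' : ‖μ * conj μ‖ = 1 := by rw [h]; simp
      rw [norm_mul, Complex.norm_conj] at h'
      nlinarith [norm_nonneg μ]
    have ht : t * (1 - μ * conj μ) = 0 := by linear_combination h2' - conj μ * h1
    have ht0 : t = 0 := by
      rcases mul_eq_zero.mp ht with h | h
      · exact h
      · exact absurd (by linear_combination -h) hnorm
    subst ht0
    refine ⟨by simpa using h1, rfl⟩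
  have hspan : Submodule.span ℂ (Set.range ![x, y]) = ⊤ :=
    hli.span_eq_top_of_card_eq_finrank (by simp [h2])
  have hu : u ∈ Submodule.span ℂ ({x, y} : Set V) := by
    have hr : Set.range ![x, y] = ({x, y} : Set V) := by
      ext v
      simp [Fin.exists_fin_two, or_comm]
    rw [← hr, hspan]
    trivial
  obtain ⟨α, γ, h⟩ := Submodule.mem_span_pair.mp hu
  exact ⟨α, γ, h.symm⟩

lemma cross_zero (x y : V) (a : ℝ) (ha0 : 0 < a) (ha1 : a < 1)
    (hxx : (inner ℂ x x : ℂ) = 1) (hyy : (inner ℂ y y : ℂ) = 1)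
    (hxy : (inner ℂ x y : ℂ) = (a : ℂ)) (hyx : (inner ℂ y x : ℂ) = (a : ℂ))
    (α γ p q : ℂ)
    (heq : (α • x + γ • y) ⊗ₜ[ℂ] (α • x + γ • y)
      = p • (x ⊗ₜ[ℂ] x) + q • (y ⊗ₜ[ℂ] y)) :
    α * γ = 0 := by
  set w : V := x - (a : ℂ) • y with hw
  set v : V := y - (a : ℂ) • x with hv
  have h := congrArg (fun z : V ⊗[ℂ] V => innerFunc (w ⊗ₜ[ℂ] v) z) heq
  simp only [hw, hv, TensorProduct.add_tmul, TensorProduct.tmul_add,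
    TensorProduct.smul_tmul', TensorProduct.tmul_smul, inner_add_right,
    inner_smul_right, innerFunc_tmul, inner_sub_left, inner_smul_left,
    Complex.conj_ofReal, hxx, hyy, hxy, hyx, map_add, map_smul, smul_eq_mul] at h
  have hane : ((1 : ℂ) - (a : ℂ) ^ 2) ≠ 0 := by
    intro hc
    have : ((a : ℂ)) ^ 2 = 1 := by linear_combination -hc
    have : (a : ℝ) ^ 2 = 1 := by exact_mod_cast this
    nlinarith
  have key : α * γ * ((1 : ℂ) - (a : ℂ) ^ 2) ^ 2 = 0 := by linear_combination h
  rcases mul_eq_zero.mp key with h' | h'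
  · exact h'
  · exact absurd (pow_eq_zero_iff (by norm_num) |>.mp h') hane

end Aux

/-- **Lemma 1.11, case `𝓔₁(a)`, `a ≠ 0`.** Every automorphism is a trivial automorphism,
possibly composed with the flip of the two units. -/
theorem statement3
    (E : ℕ+ → Type*) [∀ t, NormedAddCommGroup (E t)] [∀ t, InnerProductSpace ℂ (E t)]
    (hdim : ∀ t, Module.finrank ℂ (E t) = 2)
    (β : ∀ s t : ℕ+, E (s + t) →ₗᵢ[ℂ] (E s ⊗[ℂ] E t))
    (hassoc : SubprodAssoc E β)
    (a : ℝ) (ha0 : 0 < a) (ha1 : a < 1)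
    (x y : ∀ t : ℕ+, E t) (hxy : IsBasisE1 E β a x y)
    (θ : ∀ t : ℕ+, E t ≃ₗᵢ[ℂ] E t) (hθ : Intertwines E E β β θ) :
    (∃ c : ℝ, ∀ t : ℕ+,
        θ t (x t) = Complex.exp (Complex.I * (c : ℂ) * ((t : ℕ) : ℂ)) • x t ∧
        θ t (y t) = Complex.exp (Complex.I * (c : ℂ) * ((t : ℕ) : ℂ)) • y t) ∨
    (∃ c : ℝ, ∀ t : ℕ+,
        θ t (x t) = Complex.exp (Complex.I * (c : ℂ) * ((t : ℕ) : ℂ)) • y t ∧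
        θ t (y t) = Complex.exp (Complex.I * (c : ℂ) * ((t : ℕ) : ℂ)) • x t) := by
  obtain ⟨hnx, hny, hixy, hβx, hβy⟩ := hxy
  have hxx : ∀ t : ℕ+, (inner ℂ (x t) (x t) : ℂ) = 1 := fun t => by
    rw [inner_self_eq_norm_sq_to_K, hnx]; norm_num
  have hyy : ∀ t : ℕ+, (inner ℂ (y t) (y t) : ℂ) = 1 := fun t => by
    rw [inner_self_eq_norm_sq_to_K, hny]; norm_num
  have hyx : ∀ t : ℕ+, (inner ℂ (y t) (x t) : ℂ) = (a : ℂ) ^ (t : ℕ) := fun t => by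
    rw [← inner_conj_symm, hixy, ← Complex.ofReal_pow, Complex.conj_ofReal,
      Complex.ofReal_pow]
  have haC : ((a : ℂ)) ≠ 0 := by exact_mod_cast ha0.ne'
  have habs : ∀ t : ℕ+, ‖(a : ℂ) ^ (t : ℕ)‖ < 1 := fun t => by
    rw [norm_pow, Complex.norm_of_nonneg ha0.le]
    exact pow_lt_one₀ ha0.le ha1 t.pos.ne'
  have hrep : ∀ t (u : E t), ∃ α γ : ℂ, u = α • x t + γ • y t := fun t u =>
    span_pair_rep (hdim t) _ _ (hnx t) (hny t) _ (hixy t) (habs t) u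
  have hixy1 : (inner ℂ (x 1) (y 1) : ℂ) = (a : ℂ) := by
    rw [hixy 1, PNat.one_coe, pow_one]
  have hyx1 : (inner ℂ (y 1) (x 1) : ℂ) = (a : ℂ) := by
    rw [hyx 1, PNat.one_coe, pow_one]
  obtain ⟨α, γ1, hθx⟩ := hrep 1 (θ 1 (x 1))
  obtain ⟨α', γ', hθy⟩ := hrep 1 (θ 1 (y 1))
  -- the two cross-term equations
  have hαγ : α * γ1 = 0 := by
    obtain ⟨p, q, hpq⟩ := hrep (1 + 1) (θ (1 + 1) (x (1 + 1)))
    have h2 := hθ 1 1 (x (1 + 1))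
    rw [hβx 1 1, hpq] at h2
    simp only [TensorProduct.map_tmul, map_add, map_smul, LinearEquiv.coe_coe,
      LinearIsometryEquiv.coe_toLinearEquiv, hβx, hβy, hθx] at h2
    exact cross_zero (x 1) (y 1) a ha0 ha1 (hxx 1) (hyy 1) hixy1 hyx1 α γ1 p q h2.symm
  have hα'γ' : α' * γ' = 0 := by
    obtain ⟨p, q, hpq⟩ := hrep (1 + 1) (θ (1 + 1) (y (1 + 1)))
    have h2 := hθ 1 1 (y (1 + 1))
    rw [hβy 1 1, hpq] at h2
    simp only [TensorProduct.map_tmul, map_add, map_smul, LinearEquiv.coe_coe,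
      LinearIsometryEquiv.coe_toLinearEquiv, hβx, hβy, hθy] at h2
    exact cross_zero (x 1) (y 1) a ha0 ha1 (hxx 1) (hyy 1) hixy1 hyx1 α' γ' p q h2.symm
  -- unitarity facts
  have hinxx : (inner ℂ (θ 1 (x 1)) (θ 1 (x 1)) : ℂ) = 1 := by
    rw [LinearIsometryEquiv.inner_map_map, hxx 1]
  have hinyy : (inner ℂ (θ 1 (y 1)) (θ 1 (y 1)) : ℂ) = 1 := by
    rw [LinearIsometryEquiv.inner_map_map, hyy 1]
  have hinxy : (inner ℂ (θ 1 (x 1)) (θ 1 (y 1)) : ℂ) = (a : ℂ) := by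
    rw [LinearIsometryEquiv.inner_map_map, hixy1]
  have absone : ∀ z : ℂ, conj z * z = 1 → ‖z‖ = 1 := by
    intro z hz
    have h1 : ((Complex.normSq z : ℝ) : ℂ) = 1 := by
      rw [← Complex.mul_conj z]; linear_combination hz
    have h2 : Complex.normSq z = 1 := by exact_mod_cast h1
    rw [Complex.norm_def, h2, Real.sqrt_one]
  rcases mul_eq_zero.mp hαγ with hα0 | hγ0
  · -- α = 0 : swap case, θ 1 (x 1) = γ1 • y 1
    rw [hα0, zero_smul, zero_add] at hθx
    have hγu : conj γ1 * γ1 = 1 := by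
      have h := hinxx
      rw [hθx, inner_smul_left, inner_smul_right, hyy 1] at h
      linear_combination h
    rcases mul_eq_zero.mp hα'γ' with hα'0 | hγ'0
    · -- θ 1 (y 1) = γ' • y 1 : contradiction
      rw [hα'0, zero_smul, zero_add] at hθy
      have hγ'u : conj γ' * γ' = 1 := by
        have h := hinyy
        rw [hθy, inner_smul_left, inner_smul_right, hyy 1] at h
        linear_combination h
      have h := hinxy
      rw [hθx, hθy, inner_smul_left, inner_smul_right, hyy 1] at h
      have habs1 : ‖conj γ1 * (γ' * 1)‖ = a := by
        rw [h, Complex.norm_of_nonneg ha0.le]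
      rw [norm_mul, norm_mul, Complex.norm_conj, absone _ hγu, absone _ hγ'u] at habs1
      simp at habs1
      linarith
    · -- θ 1 (y 1) = α' • x 1, and α' = γ1
      rw [hγ'0, zero_smul, add_zero] at hθy
      have h := hinxy
      rw [hθx, hθy, inner_smul_left, inner_smul_right, hyx1] at h
      have hco : conj γ1 * α' = 1 := by
        apply mul_right_cancel₀ haC
        rw [one_mul]; linear_combination h
      have hcne : conj γ1 ≠ 0 := by
        intro hc; rw [hc, zero_mul] at hγu; exact one_ne_zero hγu.symm
      have hα'γ1 : α' = γ1 := mul_left_cancel₀ hcne (by rw [hco, hγu])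
      rw [hα'γ1] at hθy
      have habs1 : ‖γ1‖ = 1 := absone _ hγu
      have main : ∀ t : ℕ+,
          θ t (x t) = γ1 ^ (t : ℕ) • y t ∧ θ t (y t) = γ1 ^ (t : ℕ) • x t := by
        intro t
        induction t using PNat.recOn with
        | one => rw [PNat.one_coe, pow_one]; exact ⟨hθx, hθy⟩
        | succ t ih =>
          refine ⟨(β t 1).injective ?_, (β t 1).injective ?_⟩
          · have h := hθ t 1 (x (t + 1))
            rw [hβx t 1] at h
            rw [h, map_smul, hβy t 1]
            simp only [TensorProduct.map_tmul, LinearEquiv.coe_coe,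
              LinearIsometryEquiv.coe_toLinearEquiv, ih.1, hθx,
              TensorProduct.smul_tmul', TensorProduct.tmul_smul, smul_smul,
              PNat.add_coe, PNat.one_coe, pow_succ, mul_comm]
          · have h := hθ t 1 (y (t + 1))
            rw [hβy t 1] at h
            rw [h, map_smul, hβx t 1]
            simp only [TensorProduct.map_tmul, LinearEquiv.coe_coe,
              LinearIsometryEquiv.coe_toLinearEquiv, ih.2, hθy,
              TensorProduct.smul_tmul', TensorProduct.tmul_smul, smul_smul,
              PNat.add_coe, PNat.one_coe, pow_succ, mul_comm]
      right
      refine ⟨Complex.arg γ1, fun t => ?_⟩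
      have hexp : Complex.exp (Complex.I * (Complex.arg γ1 : ℂ)) = γ1 := by
        have h := Complex.norm_mul_exp_arg_mul_I γ1
        rw [habs1] at h
        rw [mul_comm Complex.I]
        simpa using h
      have hexp' : Complex.exp (Complex.I * (Complex.arg γ1 : ℂ) * ((t : ℕ) : ℂ))
          = γ1 ^ (t : ℕ) := by
        rw [show Complex.I * (Complex.arg γ1 : ℂ) * ((t : ℕ) : ℂ)
            = ((t : ℕ) : ℂ) * (Complex.I * (Complex.arg γ1 : ℂ)) from by ring,
          Complex.exp_nat_mul, hexp]
      rw [hexp']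
      exact main t
  · -- γ1 = 0 : identity case, θ 1 (x 1) = α • x 1
    rw [hγ0, zero_smul, add_zero] at hθx
    have hαu : conj α * α = 1 := by
      have h := hinxx
      rw [hθx, inner_smul_left, inner_smul_right, hxx 1] at h
      linear_combination h
    rcases mul_eq_zero.mp hα'γ' with hα'0 | hγ'0
    · -- θ 1 (y 1) = γ' • y 1, and γ' = α
      rw [hα'0, zero_smul, zero_add] at hθy
      have h := hinxy
      rw [hθx, hθy, inner_smul_left, inner_smul_right, hixy1] at h
      have hco : conj α * γ' = 1 := by
        apply mul_right_cancel₀ haC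
        rw [one_mul]; linear_combination h
      have hcne : conj α ≠ 0 := by
        intro hc; rw [hc, zero_mul] at hαu; exact one_ne_zero hαu.symm
      have hγ'α : γ' = α := mul_left_cancel₀ hcne (by rw [hco, hαu])
      rw [hγ'α] at hθy
      have habs1 : ‖α‖ = 1 := absone _ hαu
      have main : ∀ t : ℕ+,
          θ t (x t) = α ^ (t : ℕ) • x t ∧ θ t (y t) = α ^ (t : ℕ) • y t := by
        intro t
        induction t using PNat.recOn with
        | one => rw [PNat.one_coe, pow_one]; exact ⟨hθx, hθy⟩
        | succ t ih =>
          refine ⟨(β t 1).injective ?_, (β t 1).injective ?_⟩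
          · have h := hθ t 1 (x (t + 1))
            rw [hβx t 1] at h
            rw [h, map_smul, hβx t 1]
            simp only [TensorProduct.map_tmul, LinearEquiv.coe_coe,
              LinearIsometryEquiv.coe_toLinearEquiv, ih.1, hθx,
              TensorProduct.smul_tmul', TensorProduct.tmul_smul, smul_smul,
              PNat.add_coe, PNat.one_coe, pow_succ, mul_comm]
          · have h := hθ t 1 (y (t + 1))
            rw [hβy t 1] at h
            rw [h, map_smul, hβy t 1]
            simp only [TensorProduct.map_tmul, LinearEquiv.coe_coe,
              LinearIsometryEquiv.coe_toLinearEquiv, ih.2, hθy,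
              TensorProduct.smul_tmul', TensorProduct.tmul_smul, smul_smul,
              PNat.add_coe, PNat.one_coe, pow_succ, mul_comm]
      left
      refine ⟨Complex.arg α, fun t => ?_⟩
      have hexp : Complex.exp (Complex.I * (Complex.arg α : ℂ)) = α := by
        have h := Complex.norm_mul_exp_arg_mul_I α
        rw [habs1] at h
        rw [mul_comm Complex.I]
        simpa using h
      have hexp' : Complex.exp (Complex.I * (Complex.arg α : ℂ) * ((t : ℕ) : ℂ))
          = α ^ (t : ℕ) := by
        rw [show Complex.I * (Complex.arg α : ℂ) * ((t : ℕ) : ℂ)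
            = ((t : ℕ) : ℂ) * (Complex.I * (Complex.arg α : ℂ)) from by ring,
          Complex.exp_nat_mul, hexp]
      rw [hexp']
      exact main t
    · -- θ 1 (y 1) = α' • x 1 : contradiction
      rw [hγ'0, zero_smul, add_zero] at hθy
      have hα'u : conj α' * α' = 1 := by
        have h := hinyy
        rw [hθy, inner_smul_left, inner_smul_right, hxx 1] at h
        linear_combination h
      have h := hinxy
      rw [hθx, hθy, inner_smul_left, inner_smul_right, hxx 1] at h
      have habs1 : ‖conj α * (α' * 1)‖ = a := by
        rw [h, Complex.norm_of_nonneg ha0.le]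
      rw [norm_mul, norm_mul, Complex.norm_conj, absone _ hαu, absone _ hα'u] at habs1
      simp at habs1
      linarith


end SubprodHilbert
end
end

section
/- Let (E_t, β_{s,t}) be a subproduct system of two-dimensional Hilbert spaces with a basis (x_t,y_t)_t of type E_3(λ), λ ∈ ℂ∖{0}. Then for every automorphism (θ_t)_t of (E_t,β) there exist c, b ∈ ℝ such that θ_t x_t = e^{ict} x_t and θ_t y_t = e^{ib} e^{ict} y_t for all t. -/
noncomputable section

open scoped TensorProduct ComplexConjugate

namespace SubprodHilbert

section TensorConstruction


variable {E F : Type*} [NormedAddCommGroup E] [InnerProductSpace ℂ E]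
  [NormedAddCommGroup F] [InnerProductSpace ℂ F]

local notation "⟪" x ", " y "⟫" => @inner ℂ _ _ x y

end TensorConstruction


lemma tinner_add_right {E F : Type*} [NormedAddCommGroup E] [InnerProductSpace ℂ E]
    [NormedAddCommGroup F] [InnerProductSpace ℂ F] (z w w' : E ⊗[ℂ] F) :
    inner ℂ z (w + w') = inner ℂ z w + inner ℂ z w' :=
  @inner_add_right ℂ (E ⊗[ℂ] F) _ (@NormedAddCommGroup.toSeminormedAddCommGroup _ TensorProduct.instNormedAddCommGroup) TensorProduct.instInnerProductSpace z w w'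

lemma tinner_smul_right {E F : Type*} [NormedAddCommGroup E] [InnerProductSpace ℂ E]
    [NormedAddCommGroup F] [InnerProductSpace ℂ F] (z w : E ⊗[ℂ] F) (c : ℂ) :
    inner ℂ z (c • w) = c * inner ℂ z w :=
  @inner_smul_right ℂ (E ⊗[ℂ] F) _ (@NormedAddCommGroup.toSeminormedAddCommGroup _ TensorProduct.instNormedAddCommGroup) TensorProduct.instInnerProductSpace z w c



private lemma decomp_two {V : Type*} [NormedAddCommGroup V] [InnerProductSpace ℂ V]
    (h2 : Module.finrank ℂ V = 2) (x y : V) (hx : ‖x‖ = 1) (hy : y ≠ 0)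
    (hxy : (inner ℂ x y : ℂ) = 0) (v : V) :
    v = (inner ℂ x v : ℂ) • x + ((inner ℂ y v : ℂ) / ((‖y‖ : ℂ) ^ 2)) • y := by
  have hyx : (inner ℂ y x : ℂ) = 0 := by rw [← inner_conj_symm, hxy, map_zero]
  have hxxI : (inner ℂ x x : ℂ) = 1 := by
    rw [inner_self_eq_norm_sq_to_K, hx]; norm_num
  have hyn : ((‖y‖ : ℂ)) ≠ 0 := by
    simpa using norm_ne_zero_iff.mpr hy
  have hyn2 : ((‖y‖ : ℂ)) ^ 2 ≠ 0 := pow_ne_zero 2 hyn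
  have hli : LinearIndependent ℂ ![x, y] := by
    rw [LinearIndependent.pair_iff]
    intro s t hst
    have h1 := congrArg (fun w => (inner ℂ x w : ℂ)) hst
    have h2' := congrArg (fun w => (inner ℂ y w : ℂ)) hst
    simp only [inner_add_right, inner_smul_right, hxy, hyx, hxxI,
      inner_self_eq_norm_sq_to_K, inner_zero_right, mul_zero, mul_one, add_zero,
      zero_add] at h1 h2'
    refine ⟨h1, ?_⟩
    rcases mul_eq_zero.mp h2' with h | h
    · exact h
    · exact absurd h hyn2
  have hsp : Submodule.span ℂ (Set.range ![x, y]) = ⊤ :=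
    hli.span_eq_top_of_card_eq_finrank (by simp [h2])
  have hrange : Set.range ![x, y] = {x, y} := by
    ext w
    constructor
    · rintro ⟨i, rfl⟩
      fin_cases i <;> simp
    · rintro (rfl | rfl)
      · exact ⟨0, rfl⟩
      · exact ⟨1, rfl⟩
  have hv : v ∈ Submodule.span ℂ ({x, y} : Set V) := by
    rw [← hrange, hsp]; trivial
  obtain ⟨s, t, hst⟩ := Submodule.mem_span_pair.mp hv
  have hav : (inner ℂ x v : ℂ) = s := by
    rw [← hst]
    simp [inner_add_right, inner_smul_right, hxy, hxxI, hx]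
  have hbv : (inner ℂ y v : ℂ) = t * (‖y‖ : ℂ) ^ 2 := by
    rw [← hst]
    simp [inner_add_right, inner_smul_right, hyx, inner_self_eq_norm_sq_to_K]
  rw [hav, hbv, ← hst]
  congr 1
  rw [mul_div_assoc, div_self hyn2, mul_one]

/-- **Lemma 1.11, case `𝓔₃(λ)`.** -/
theorem statement5
    (E : ℕ+ → Type*) [∀ t, NormedAddCommGroup (E t)] [∀ t, InnerProductSpace ℂ (E t)]
    (hdim : ∀ t, Module.finrank ℂ (E t) = 2)
    (β : ∀ s t : ℕ+, E (s + t) →ₗᵢ[ℂ] (E s ⊗[ℂ] E t))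
    (hassoc : SubprodAssoc E β)
    (l : ℂ) (hl : l ≠ 0)
    (x y : ∀ t : ℕ+, E t) (hxy : IsBasisE3 E β l x y)
    (θ : ∀ t : ℕ+, E t ≃ₗᵢ[ℂ] E t) (hθ : Intertwines E E β β θ) :
    ∃ c b : ℝ, ∀ t : ℕ+,
      θ t (x t) = Complex.exp (Complex.I * (c : ℂ) * ((t : ℕ) : ℂ)) • x t ∧
      θ t (y t) = (Complex.exp (Complex.I * (b : ℂ)) *
        Complex.exp (Complex.I * (c : ℂ) * ((t : ℕ) : ℂ))) • y t := by
  classical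
  obtain ⟨hxn, hyn2, hob, hbx, hby⟩ := hxy
  -- basic facts about x and y
  have hNpos : ∀ t : ℕ+, 0 < ‖y t‖ := by
    intro t
    have h1 : (1 : ℝ) ≤ ‖y t‖ ^ 2 := by
      rw [hyn2 t]
      have h0 : (0 : ℕ) ∈ Finset.range (t : ℕ) := Finset.mem_range.mpr t.pos
      calc (1 : ℝ) = ‖l‖ ^ (2 * 0) := by norm_num
        _ ≤ ∑ k ∈ Finset.range (t : ℕ), ‖l‖ ^ (2 * k) :=
          Finset.single_le_sum (fun k _ => pow_nonneg (norm_nonneg l) _) h0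
    nlinarith [norm_nonneg (y t)]
  have hyne : ∀ t, y t ≠ 0 := fun t => norm_pos_iff.mp (hNpos t)
  have hNne : ∀ t : ℕ+, ((‖y t‖ : ℂ)) ^ 2 ≠ 0 := fun t =>
    pow_ne_zero 2 (by exact_mod_cast (hNpos t).ne')
  have hyx0 : ∀ t : ℕ+, (inner ℂ (y t) (x t) : ℂ) = 0 := fun t => by
    rw [← inner_conj_symm, hob t, map_zero]
  have hxx1 : ∀ t : ℕ+, (inner ℂ (x t) (x t) : ℂ) = 1 := fun t => by
    rw [inner_self_eq_norm_sq_to_K, hxn t]; norm_num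
  have hyyN : ∀ t : ℕ+, (inner ℂ (y t) (y t) : ℂ) = ((‖y t‖ : ℂ)) ^ 2 := fun t =>
    inner_self_eq_norm_sq_to_K _
  -- coefficient functions
  obtain ⟨a, ha⟩ : ∃ a : ℕ+ → ℂ, ∀ t, a t = (inner ℂ (x t) (θ t (x t)) : ℂ) :=
    ⟨_, fun _ => rfl⟩
  obtain ⟨bc, hbcdef⟩ : ∃ bc : ℕ+ → ℂ,
      ∀ t, bc t = (inner ℂ (y t) (θ t (x t)) : ℂ) / ((‖y t‖ : ℂ)) ^ 2 :=
    ⟨_, fun _ => rfl⟩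
  have hdecx : ∀ t, θ t (x t) = a t • x t + bc t • y t := by
    intro t
    rw [ha, hbcdef]
    exact decomp_two (hdim t) (x t) (y t) (hxn t) (hyne t) (hob t) _
  -- the intertwining relation on x
  have key_x : ∀ s t : ℕ+,
      a (s + t) • (x s ⊗ₜ[ℂ] x t) +
        bc (s + t) • (y s ⊗ₜ[ℂ] x t + l ^ (s : ℕ) • (x s ⊗ₜ[ℂ] y t)) =
      θ s (x s) ⊗ₜ[ℂ] θ t (x t) := by
    intro s t
    have h := hθ s t (x (s + t))
    rw [hbx s t, TensorProduct.map_tmul] at h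
    rw [hdecx (s + t), map_add, map_smul, map_smul, hbx s t, hby s t] at h
    simpa using h
  -- b = 0
  have hbc0 : ∀ t, bc t = 0 := by
    intro t
    have h := congrArg (fun z => (inner ℂ (y t ⊗ₜ[ℂ] y t) z : ℂ)) (key_x t t)
    simp only [inner_add_right, inner_smul_right, tinner_add_right, tinner_smul_right, inner_tmul, hyx0, hob, hyyN,
      mul_zero, zero_mul, mul_one, add_zero, zero_add] at h
    have h' : (inner ℂ (y t) (θ t (x t)) : ℂ) = 0 := by
      have := h.symm
      rcases mul_eq_zero.mp this with h0 | h0 <;> exact h0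
    rw [hbcdef, h', zero_div]
  have hthx : ∀ t, θ t (x t) = a t • x t := by
    intro t
    rw [hdecx t, hbc0 t, zero_smul, add_zero]
  -- |a t| = 1
  have habs : ∀ t, ‖a t‖ = 1 := by
    intro t
    have h : ‖θ t (x t)‖ = 1 := by rw [(θ t).norm_map, hxn t]
    rw [hthx t, norm_smul, hxn t, mul_one] at h
    simpa using h
  have hane : ∀ t, a t ≠ 0 := by
    intro t h
    have := habs t
    rw [h] at this
    simp at this
  -- a is multiplicative
  have hamul : ∀ s t : ℕ+, a (s + t) = a s * a t := by
    intro s t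
    have h := congrArg (fun z => (inner ℂ (x s ⊗ₜ[ℂ] x t) z : ℂ)) (key_x s t)
    simp only [inner_add_right, inner_smul_right, tinner_add_right, tinner_smul_right, inner_tmul, hxx1, hob, hyx0,
      mul_zero, zero_mul, mul_one, one_mul, add_zero, zero_add] at h
    rw [h, ← ha, ← ha]
  -- orthogonality forces c = 0
  have hc0 : ∀ t : ℕ+, (inner ℂ (x t) (θ t (y t)) : ℂ) = 0 := by
    intro t
    have h : (inner ℂ (θ t (x t)) (θ t (y t)) : ℂ) = 0 := by
      rw [(θ t).inner_map_map, hob t]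
    rw [hthx t, inner_smul_left] at h
    have : (starRingEnd ℂ) (a t) ≠ 0 := by
      simpa using hane t
    exact (mul_eq_zero.mp h).resolve_left this
  -- δ
  obtain ⟨δ, hδdef⟩ : ∃ δ : ℕ+ → ℂ,
      ∀ t, δ t = (inner ℂ (y t) (θ t (y t)) : ℂ) / ((‖y t‖ : ℂ)) ^ 2 :=
    ⟨_, fun _ => rfl⟩
  have hthy : ∀ t, θ t (y t) = δ t • y t := by
    intro t
    have h := decomp_two (hdim t) (x t) (y t) (hxn t) (hyne t) (hob t) (θ t (y t))
    rw [hc0 t, zero_smul, zero_add] at h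
    rw [hδdef]
    exact h
  have hδabs : ∀ t, ‖δ t‖ = 1 := by
    intro t
    have h : ‖θ t (y t)‖ = ‖y t‖ := (θ t).norm_map _
    rw [hthy t, norm_smul] at h
    have hyne' : ‖y t‖ ≠ 0 := (hNpos t).ne'
    nth_rewrite 2 [← one_mul (‖y t‖)] at h
    exact mul_right_cancel₀ hyne' h
  -- the intertwining relation on y
  have key_y : ∀ s t : ℕ+,
      δ (s + t) • (y s ⊗ₜ[ℂ] x t + l ^ (s : ℕ) • (x s ⊗ₜ[ℂ] y t)) =
        (δ s • y s) ⊗ₜ[ℂ] (a t • x t) + l ^ (s : ℕ) • ((a s • x s) ⊗ₜ[ℂ] (δ t • y t)) := by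
    intro s t
    have h := hθ s t (y (s + t))
    rw [hby s t, map_add, map_smul, TensorProduct.map_tmul, TensorProduct.map_tmul] at h
    rw [hthy (s + t), map_smul, hby s t] at h
    simpa [hthx, hthy] using h
  have hδ1 : ∀ s t : ℕ+, δ (s + t) = δ s * a t := by
    intro s t
    have h := congrArg (fun z => (inner ℂ (y s ⊗ₜ[ℂ] x t) z : ℂ)) (key_y s t)
    simp only [inner_add_right, inner_smul_right, tinner_add_right, tinner_smul_right, inner_tmul, inner_smul_right,
      hxx1, hob, hyx0, hyyN, mul_zero, zero_mul, mul_one, one_mul, add_zero,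
      zero_add] at h
    have hN := hNne s
    have h2 : δ (s + t) * ((‖y s‖ : ℂ)) ^ 2 = δ s * a t * ((‖y s‖ : ℂ)) ^ 2 := by
      linear_combination h
    exact mul_right_cancel₀ hN h2
  have hδ2 : ∀ s t : ℕ+, δ (s + t) = a s * δ t := by
    intro s t
    have h := congrArg (fun z => (inner ℂ (x s ⊗ₜ[ℂ] y t) z : ℂ)) (key_y s t)
    simp only [inner_add_right, inner_smul_right, tinner_add_right, tinner_smul_right, inner_tmul, hxx1, hob, hyx0,
      hyyN, mul_zero, zero_mul, mul_one, one_mul, add_zero, zero_add] at h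
    have hls : l ^ (s : ℕ) ≠ 0 := pow_ne_zero _ hl
    have hN := hNne t
    have h2 : l ^ (s : ℕ) * ((‖y t‖ : ℂ)) ^ 2 * δ (s + t) =
        l ^ (s : ℕ) * ((‖y t‖ : ℂ)) ^ 2 * (a s * δ t) := by
      linear_combination h
    exact mul_left_cancel₀ (mul_ne_zero hls hN) h2
  -- δ t = μ * a t
  have hμ : ∀ t : ℕ+, δ t = (δ 1 / a 1) * a t := by
    intro t
    have h := (hδ1 1 t).symm.trans (hδ2 1 t)
    rw [div_mul_eq_mul_div, eq_div_iff (hane 1)]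
    linear_combination -h
  have hμabs : ‖δ 1 / a 1‖ = 1 := by
    rw [norm_div, hδabs, habs, div_one]
  -- a t = (a 1) ^ t
  have hapow : ∀ t : ℕ+, a t = a 1 ^ (t : ℕ) := by
    intro t
    induction t using PNat.recOn with
    | one => simp
    | succ n ih =>
        have : a (n + 1) = a n * a 1 := hamul n 1
        rw [this, ih]
        rw [PNat.add_coe, PNat.one_coe, pow_succ]
  refine ⟨(a 1).arg, (δ 1 / a 1).arg, fun t => ?_⟩
  have hexpc : Complex.exp (Complex.I * ((a 1).arg : ℂ)) = a 1 := by
    have := Complex.norm_mul_exp_arg_mul_I (a 1)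
    rw [habs 1] at this
    rw [mul_comm]
    simpa using this
  have hexpb : Complex.exp (Complex.I * (((δ 1 / a 1).arg : ℝ) : ℂ)) = δ 1 / a 1 := by
    have := Complex.norm_mul_exp_arg_mul_I (δ 1 / a 1)
    rw [hμabs] at this
    rw [mul_comm]
    simpa using this
  have hexpct : Complex.exp (Complex.I * ((a 1).arg : ℂ) * ((t : ℕ) : ℂ)) = a t := by
    have h1 : Complex.I * ((a 1).arg : ℂ) * ((t : ℕ) : ℂ) =
        ((t : ℕ) : ℂ) * (Complex.I * ((a 1).arg : ℂ)) := by ring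
    rw [h1, Complex.exp_nat_mul, hexpc, ← hapow]
  constructor
  · rw [hthx t, hexpct]
  · rw [hthy t, hμ t, hexpb, hexpct]



end SubprodHilbert
end
end
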